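/- Let ε > 0, δ ≥ 0, and let y : [0,∞) → ℝ be differentiable with y(0) = r² ≥ 0 and y'(t) ≤ 2ε² − 2y(t)(y(t) − δ) for all t ≥ 0, with y(t) ≥ 0. Then y(t) ≤ r*² + r²·exp(−2√(4ε² + δ²)·t) for all t ≥ 0, where r*² = (δ + √(4ε² + δ²))/2. -/

import Mathlib

/-- Ultimate bound for the second moment of the stochastic Hopf equation above and at
the bifurcation point: if `y' ≤ 2ε² − 2y(y − δ)` with `y(0) = r²` then
`y(t) ≤ r*² + r² exp(−2√(4ε²+δ²) t)` where `r*² = (δ + √(4ε²+δ²))/2`. -/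
theorem hopf_ultimate_bound_supercritical
    (ε δ r : ℝ) (hε : 0 < ε) (hδ : 0 ≤ δ) (y d : ℝ → ℝ)
    (hy0 : y 0 = r ^ 2)
    (hy : ∀ t, HasDerivAt y (d t) t)
    (hyn : ∀ t ≥ (0 : ℝ), 0 ≤ y t)
    (hd : ∀ t ≥ (0 : ℝ), d t ≤ 2 * ε ^ 2 - 2 * y t * (y t - δ)) :
    ∀ t ≥ (0 : ℝ),
      y t ≤ (δ + Real.sqrt (4 * ε ^ 2 + δ ^ 2)) / 2
        + r ^ 2 * Real.exp (-2 * Real.sqrt (4 * ε ^ 2 + δ ^ 2) * t) := by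
  intro t ht
  set s := Real.sqrt (4 * ε ^ 2 + δ ^ 2) with hsdef
  have hs0 : 0 < s := Real.sqrt_pos.mpr (by positivity)
  have hssq : s ^ 2 = 4 * ε ^ 2 + δ ^ 2 := Real.sq_sqrt (by positivity)
  set a := (δ + s) / 2 with hadef
  have ha0 : 0 ≤ a := by positivity
  set g := fun u => (y u - a) * Real.exp (2 * s * u) with hgdef
  have hgd : ∀ u : ℝ, HasDerivAt g
      (d u * Real.exp (2 * s * u) + (y u - a) * (2 * s * Real.exp (2 * s * u))) u := by
    intro u
    have h1 : HasDerivAt (fun v => y v - a) (d u) u := (hy u).sub_const a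
    have h2 : HasDerivAt (fun v : ℝ => Real.exp (2 * s * v))
        (2 * s * Real.exp (2 * s * u)) u := by
      simpa [mul_comm] using ((hasDerivAt_id u).const_mul (2 * s)).exp
    exact h1.mul h2
  have hmono : AntitoneOn g (Set.Ici (0 : ℝ)) := by
    apply antitoneOn_of_deriv_nonpos (convex_Ici 0)
    · exact fun u _ => (hgd u).continuousAt.continuousWithinAt
    · intro u hu
      exact (hgd u).differentiableAt.differentiableWithinAt
    · intro u hu
      rw [interior_Ici] at hu
      have hu0 : (0 : ℝ) ≤ u := le_of_lt hu
      rw [(hgd u).deriv]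
      have h1 := hd u hu0
      have key : d u + 2 * s * (y u - a) ≤ -2 * (y u - a) ^ 2 := by
        rw [hadef]; nlinarith [h1, hssq]
      have hep : 0 < Real.exp (2 * s * u) := Real.exp_pos _
      nlinarith [sq_nonneg (y u - a), hep]
  have hg0 : g t ≤ g 0 := hmono Set.self_mem_Ici ht ht
  have hg0v : g 0 = r ^ 2 - a := by simp [hgdef, hy0]
  have hgt : (y t - a) * Real.exp (2 * s * t) ≤ r ^ 2 := by
    have : g t ≤ r ^ 2 - a := hg0v ▸ hg0
    calc (y t - a) * Real.exp (2 * s * t) = g t := rfl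
      _ ≤ r ^ 2 - a := this
      _ ≤ r ^ 2 := by linarith
  have hexp : Real.exp (-2 * s * t) * Real.exp (2 * s * t) = 1 := by
    rw [← Real.exp_add]; ring_nf; exact Real.exp_zero
  have hep2 : 0 < Real.exp (-2 * s * t) := Real.exp_pos _
  have h3 := mul_le_mul_of_nonneg_left hgt (le_of_lt hep2)
  have h4 : y t - a ≤ r ^ 2 * Real.exp (-2 * s * t) := by
    calc y t - a = Real.exp (-2 * s * t) * ((y t - a) * Real.exp (2 * s * t)) := by
          rw [show Real.exp (-2*s*t) * ((y t - a) * Real.exp (2*s*t))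
              = (y t - a) * (Real.exp (-2*s*t) * Real.exp (2*s*t)) by ring, hexp, mul_one]
      _ ≤ Real.exp (-2 * s * t) * r ^ 2 := h3
      _ = r ^ 2 * Real.exp (-2 * s * t) := mul_comm _ _
  rw [hadef] at h4 ⊢
  linarith
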